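/- Let A, U and V be standard Borel spaces and let Φ : Multiset U → V be measurable with respect to the counting σ-algebra on Multiset U. Then the group-by aggregation query Q : Multiset (A × U) → Multiset (A × V), defined by Q(D) = the multiset containing, for each distinct first component a occurring in D, exactly one copy of the pair (a, Φ(G_a)), where G_a is the multiset (with multiplicity) of second components u of pairs (a, u) in D, is measurable with respect to the counting σ-algebras on Multiset (A × U) and Multiset (A × V) (for the product measurable structures on A × U and A × V). -/

import Mathlib

/- `countIn D E` is the number of elements of the finite multiset `D` lying in the set `E`,
counted with multiplicity. -/
open Classical in
noncomputable def countIn {X : Type*} (D : Multiset X) (E : Set X) : ℕ :=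
  (D.filter (· ∈ E)).card

/-- The counting σ-algebra on the space of finite multisets over a measurable space `X`:
generated by the counting events `C(E,n) = {D | countIn D E = n}` for `E` measurable, `n : ℕ`. -/
def countingMS (X : Type*) [MeasurableSpace X] : MeasurableSpace (Multiset X) :=
  MeasurableSpace.generateFrom
    {C : Set (Multiset X) |
      ∃ (E : Set X) (n : ℕ), MeasurableSet E ∧ C = {D : Multiset X | countIn D E = n}}

namespace GroupByAggregationAux

open MeasureTheory MeasurableSpace Set
open scoped ENNReal

def cell (m : ℕ) (i : ℤ) : Set ℝ := Set.Ico ((i:ℝ)/2^m) ((i+1)/2^m)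

lemma measurableSet_cell (m : ℕ) (i : ℤ) : MeasurableSet (cell m i) :=
  measurableSet_Ico

lemma mem_cell_iff {m : ℕ} {i : ℤ} {x : ℝ} : x ∈ cell m i ↔ ⌊x * 2^m⌋ = i := by
  have h2 : (0:ℝ) < 2^m := by positivity
  rw [cell, Set.mem_Ico, Int.floor_eq_iff, div_le_iff₀ h2, lt_div_iff₀ h2]

/-- points of one fine cell have equal coarse floors -/
lemma floor_coarse {m m' : ℕ} (h : m ≤ m') {x y : ℝ}
    (hxy : ⌊x * 2^m'⌋ = ⌊y * 2^m'⌋) : ⌊x * 2^m⌋ = ⌊y * 2^m⌋ := by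
  have h2 : (0:ℝ) < 2^m := by positivity
  have h2' : (0:ℝ) < 2^m' := by positivity
  set i' : ℤ := ⌊y * 2^m'⌋ with hi'
  have hx : (i' : ℝ) ≤ x * 2^m' ∧ x * 2^m' < i' + 1 := by
    rw [← hxy]; exact ⟨Int.floor_le _, Int.lt_floor_add_one _⟩
  have hy : (i' : ℝ) ≤ y * 2^m' ∧ y * 2^m' < i' + 1 :=
    ⟨Int.floor_le _, Int.lt_floor_add_one _⟩
  -- no integer strictly between coarse values
  by_contra hne
  -- wlog floor x < floor y
  rcases lt_or_gt_of_ne hne with hlt | hlt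
  case _ =>
    -- ⌊x2^m⌋ < ⌊y2^m⌋, so integer n := ⌊y2^m⌋ satisfies x2^m < n ≤ y2^m
    have hn1 : x * 2^m < (⌊y * 2^m⌋ : ℝ) := by
      have := Int.lt_floor_add_one (x * 2^m)
      have : (⌊x * 2^m⌋ : ℝ) + 1 ≤ (⌊y * 2^m⌋ : ℝ) := by exact_mod_cast hlt
      nlinarith [Int.lt_floor_add_one (x * 2^m)]
    have hn2 : (⌊y * 2^m⌋ : ℝ) ≤ y * 2^m := Int.floor_le _
    -- multiply by 2^(m'-m)
    have hk : (2:ℝ)^m' = 2^m * 2^(m'-m) := by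
      rw [← pow_add]; congr 1; omega
    have hkpos : (0:ℝ) < 2^(m'-m) := by positivity
    have hA : x * 2^m' < (⌊y * 2^m⌋ : ℝ) * 2^(m'-m) := by
      rw [hk, ← mul_assoc]; nlinarith
    have hB : (⌊y * 2^m⌋ : ℝ) * 2^(m'-m) ≤ y * 2^m' := by
      rw [hk, ← mul_assoc]; nlinarith
    -- so integer N = ⌊y2^m⌋ * 2^(m'-m) is in (x2^m', y2^m'] ⊆ (i'-? ...)
    -- then i' ≤ x2^m' < N ≤ y2^m' < i'+1, so i' < N < i'+1 as integers: contradiction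
    have c1 : (i' : ℝ) < (⌊y * 2^m⌋ : ℝ) * 2^(m'-m) := lt_of_le_of_lt hx.1 hA
    have c2 : ((⌊y * 2^m⌋ : ℝ) * 2^(m'-m)) < i' + 1 := lt_of_le_of_lt hB hy.2
    have c1' : i' < ⌊y * 2^m⌋ * 2^(m'-m) := by exact_mod_cast (by push_cast; exact c1 : (i':ℝ) < ((⌊y * 2^m⌋ * 2^(m'-m) : ℤ) : ℝ))
    have c2' : ⌊y * 2^m⌋ * 2^(m'-m) < i' + 1 := by exact_mod_cast (by push_cast; exact c2 : ((⌊y * 2^m⌋ * 2^(m'-m) : ℤ) : ℝ) < i' + 1)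
    omega
  case _ =>
    have hn1 : y * 2^m < (⌊x * 2^m⌋ : ℝ) := by
      have : (⌊y * 2^m⌋ : ℝ) + 1 ≤ (⌊x * 2^m⌋ : ℝ) := by exact_mod_cast hlt
      nlinarith [Int.lt_floor_add_one (y * 2^m)]
    have hn2 : (⌊x * 2^m⌋ : ℝ) ≤ x * 2^m := Int.floor_le _
    have hk : (2:ℝ)^m' = 2^m * 2^(m'-m) := by
      rw [← pow_add]; congr 1; omega
    have hkpos : (0:ℝ) < 2^(m'-m) := by positivity
    have hA : y * 2^m' < (⌊x * 2^m⌋ : ℝ) * 2^(m'-m) := by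
      rw [hk, ← mul_assoc]; nlinarith
    have hB : (⌊x * 2^m⌋ : ℝ) * 2^(m'-m) ≤ x * 2^m' := by
      rw [hk, ← mul_assoc]; nlinarith
    have c1 : (i' : ℝ) < (⌊x * 2^m⌋ : ℝ) * 2^(m'-m) := lt_of_le_of_lt hy.1 hA
    have c2 : ((⌊x * 2^m⌋ : ℝ) * 2^(m'-m)) < i' + 1 := lt_of_le_of_lt hB hx.2
    have c1' : i' < ⌊x * 2^m⌋ * 2^(m'-m) := by exact_mod_cast (by push_cast; exact c1 : (i':ℝ) < ((⌊x * 2^m⌋ * 2^(m'-m) : ℤ) : ℝ))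
    have c2' : ⌊x * 2^m⌋ * 2^(m'-m) < i' + 1 := by exact_mod_cast (by push_cast; exact c2 : ((⌊x * 2^m⌋ * 2^(m'-m) : ℤ) : ℝ) < i' + 1)
    omega


lemma separation {x y : ℝ} (h : x ≠ y) : ∃ N, ∀ m ≥ N, ⌊x * 2^m⌋ ≠ ⌊y * 2^m⌋ := by
  obtain ⟨N, hN⟩ := pow_unbounded_of_one_lt (1 / |x - y|) (one_lt_two (α := ℝ))
  refine ⟨N, fun m hm hfl => ?_⟩
  have hd : (0:ℝ) < |x - y| := abs_pos.mpr (sub_ne_zero.mpr h)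
  have h2 : (1:ℝ) / |x - y| < 2 ^ m :=
    lt_of_lt_of_le hN (pow_le_pow_right₀ (by norm_num) hm)
  have h3 : 1 < |x - y| * 2^m := by
    rw [div_lt_iff₀ hd] at h2; linarith [h2]
  have h4 : |x - y| * 2^m = |x * 2^m - y * 2^m| := by
    rw [← sub_mul, abs_mul, abs_of_pos (by positivity : (0:ℝ) < 2^m)]
  have h5 : |x * 2^m - y * 2^m| < 1 := by
    have hx1 : (⌊x * 2^m⌋ : ℝ) ≤ x * 2^m := Int.floor_le _
    have hx2 : x * 2^m < ⌊x * 2^m⌋ + 1 := Int.lt_floor_add_one _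
    have hy1 : (⌊y * 2^m⌋ : ℝ) ≤ y * 2^m := Int.floor_le _
    have hy2 : y * 2^m < ⌊y * 2^m⌋ + 1 := Int.lt_floor_add_one _
    rw [hfl] at hx1 hx2
    rw [abs_sub_lt_iff]; constructor <;> linarith
  rw [h4] at h3; linarith

/-- membership in a coarse cell is equivalent to the fine-cell index lying in a range -/
lemma floor_refine (m₀ n : ℕ) (j : ℤ) (x : ℝ) :
    ⌊x * 2^m₀⌋ = j ↔ (j * 2^n ≤ ⌊x * 2^(m₀+n)⌋ ∧ ⌊x * 2^(m₀+n)⌋ < (j+1) * 2^n) := by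
  have h2 : (0:ℝ) < 2^n := by positivity
  have hsplit : x * 2^(m₀+n) = (x * 2^m₀) * 2^n := by ring
  constructor
  · intro hj
    have h1 : (j : ℝ) ≤ x * 2^m₀ := hj ▸ Int.floor_le _
    have h2' : x * 2^m₀ < j + 1 := hj ▸ Int.lt_floor_add_one _
    have hl : (j * 2^n : ℤ) ≤ ⌊x * 2^(m₀+n)⌋ := by
      apply Int.le_floor.mpr
      rw [hsplit]; push_cast; nlinarith
    have hr : (⌊x * 2^(m₀+n)⌋ : ℝ) < (j+1) * 2^n := by
      calc (⌊x * 2^(m₀+n)⌋ : ℝ) ≤ x * 2^(m₀+n) := Int.floor_le _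
        _ = (x * 2^m₀) * 2^n := hsplit
        _ < ((j:ℝ)+1) * 2^n := by nlinarith
    exact ⟨hl, by exact_mod_cast (by push_cast at hr ⊢; exact hr : (⌊x * 2^(m₀+n)⌋ : ℝ) < ((j+1) * 2^n : ℤ))⟩
  · rintro ⟨hl, hr⟩
    have h1 : ((j * 2^n : ℤ) : ℝ) ≤ x * 2^(m₀+n) :=
      le_trans (by exact_mod_cast hl) (Int.floor_le _)
    have h2' : x * 2^(m₀+n) < ((j+1) * 2^n : ℤ) := by
      calc x * 2^(m₀+n) < ⌊x * 2^(m₀+n)⌋ + 1 := Int.lt_floor_add_one _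
        _ ≤ ((j+1) * 2^n : ℤ) := by exact_mod_cast hr
    rw [hsplit] at h1 h2'
    push_cast at h1 h2'
    have : (j:ℝ) ≤ x * 2^m₀ := by nlinarith
    have : x * 2^m₀ < (j:ℝ) + 1 := by nlinarith
    rw [Int.floor_eq_iff] <;> constructor <;> assumption


lemma borel_le_cells : (inferInstance : MeasurableSpace ℝ) ≤
    MeasurableSpace.generateFrom {s : Set ℝ | ∃ m i, s = cell m i} := by
  rw [(BorelSpace.measurable_eq (α := ℝ)), borel_eq_generateFrom_Iio ℝ]
  refine MeasurableSpace.generateFrom_le ?_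
  rintro _ ⟨x, rfl⟩
  have : Iio x = ⋃ p : ℕ × ℤ,
      if ((p.2:ℝ)+1)/2^p.1 ≤ x then cell p.1 p.2 else ∅ := by
    ext y
    simp only [mem_Iio, mem_iUnion]
    constructor
    · intro hy
      obtain ⟨m, hm⟩ := pow_unbounded_of_one_lt (1 / (x - y)) (one_lt_two (α := ℝ))
      have hxy : (0:ℝ) < x - y := by linarith
      have h2 : (0:ℝ) < 2^m := by positivity
      have hsmall : 1 / 2^m < x - y := by
        rw [div_lt_iff₀ hxy] at hm
        rw [div_lt_iff₀ h2]
        nlinarith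
      refine ⟨(m, ⌊y * 2^m⌋), ?_⟩
      have hcond : ((⌊y * 2^m⌋ : ℝ)+1)/2^m ≤ x := by
        have h1 : (⌊y * 2^m⌋ : ℝ) ≤ y * 2^m := Int.floor_le _
        have hkey : 1 < (x - y) * 2^m := by
          rw [div_lt_iff₀ h2] at hsmall; linarith
        rw [div_le_iff₀ h2]
        nlinarith
      rw [if_pos hcond]
      exact mem_cell_iff.mpr rfl
    · rintro ⟨⟨m, i⟩, hy⟩
      by_cases hcond : ((i:ℝ)+1)/2^m ≤ x
      · rw [if_pos hcond] at hy
        have := hy.2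
        simp only [cell, mem_Ico] at hy
        have : y < ((i:ℝ)+1)/2^m := by exact_mod_cast hy.2
        linarith
      · rw [if_neg hcond] at hy; exact absurd hy (notMem_empty y)
  rw [this]
  refine MeasurableSet.iUnion fun p => ?_
  split_ifs
  · exact MeasurableSpace.measurableSet_generateFrom ⟨p.1, p.2, rfl⟩
  · exact @MeasurableSet.empty _ (MeasurableSpace.generateFrom _)

noncomputable def mOf {X : Type*} [MeasurableSpace X] (D : Multiset X) : Measure X :=
  (D.map Measure.dirac).sum

lemma mOf_apply {X : Type*} [MeasurableSpace X] (D : Multiset X) {E : Set X}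
    (hE : MeasurableSet E) : mOf D E = countIn D E := by
  induction D using Multiset.induction with
  | empty => simp [mOf, countIn]
  | cons a D ih =>
    classical
    have h1 : mOf (a ::ₘ D) = Measure.dirac a + mOf D := by
      simp [mOf, Multiset.map_cons, Multiset.sum_cons]
    have h2 : countIn (a ::ₘ D) E = (if a ∈ E then 1 else 0) + countIn D E := by
      simp only [countIn, Multiset.filter_cons]
      split_ifs <;> simp [Multiset.card_add] <;> omega
    rw [h1, h2, Measure.add_apply, Measure.dirac_apply' a hE, ih]
    push_cast
    by_cases h : a ∈ E
    · simp [Set.indicator_of_mem h, h]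
    · simp [Set.indicator_of_notMem h, h]

lemma mOf_univ {X : Type*} [MeasurableSpace X] (D : Multiset X) :
    mOf D univ = Multiset.card D := by
  rw [mOf_apply D MeasurableSet.univ]
  norm_cast
  rw [countIn]
  congr 1
  induction D using Multiset.induction with
  | empty => simp
  | cons a D ih => simp only [Multiset.filter_cons]; simp

lemma mOf_ne_top {X : Type*} [MeasurableSpace X] (D : Multiset X) (E : Set X) :
    mOf D E ≠ ⊤ := by
  refine ne_top_of_le_ne_top ?_ (measure_mono (subset_univ E))
  rw [mOf_univ]
  exact ENNReal.natCast_ne_top _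

lemma measurable_mOf_comp {Ω X : Type*} [mΩ : MeasurableSpace Ω] [MeasurableSpace X]
    {g : Ω → Multiset X} {E : Set X} (hE : MeasurableSet E)
    (h : ∀ k : ℕ, MeasurableSet {ω | countIn (g ω) E = k}) :
    Measurable fun ω => mOf (g ω) E := by
  have heq : (fun ω => mOf (g ω) E) =
      (Nat.cast : ℕ → ℝ≥0∞) ∘ fun ω => countIn (g ω) E := by
    funext ω; exact mOf_apply _ hE
  rw [heq]
  exact measurable_from_nat.comp (measurable_to_nat fun y => h _)


open Classical in
lemma countIn_eq_countP {X : Type*} (D : Multiset X) (E : Set X) :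
    countIn D E = D.countP (· ∈ E) := by
  rw [countIn, Multiset.countP_eq_card_filter]

lemma measurableSet_counting {X : Type*} [MeasurableSpace X] {E : Set X} (hE : MeasurableSet E)
    (n : ℕ) : MeasurableSet[countingMS X] {D : Multiset X | countIn D E = n} :=
  MeasurableSpace.measurableSet_generateFrom ⟨E, n, hE, rfl⟩

open Classical in
lemma measurable_restrictSnd {A U : Type*} [MeasurableSpace A] [MeasurableSpace U]
    {W : Set A} (hW : MeasurableSet W) :
    @Measurable _ _ (countingMS (A × U)) (countingMS U)
      (fun D : Multiset (A × U) => (D.filter (fun p => p.1 ∈ W)).map Prod.snd) := by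
  letI : MeasurableSpace (Multiset (A × U)) := countingMS (A × U)
  apply measurable_generateFrom
  rintro _ ⟨F, k, hF, rfl⟩
  have hkey : ∀ D : Multiset (A × U),
      countIn ((D.filter (fun p => p.1 ∈ W)).map Prod.snd) F = countIn D (W ×ˢ F) := by
    intro D
    induction D using Multiset.induction with
    | empty => simp [countIn]
    | cons p D ih =>
      simp only [countIn] at ih ⊢
      by_cases h1 : p.1 ∈ W <;> by_cases h2 : p.2 ∈ F <;>
        simp [Multiset.filter_cons, h1, h2, Set.mem_prod, ih]
  have : (fun D : Multiset (A × U) => (D.filter (fun p => p.1 ∈ W)).map Prod.snd) ⁻¹'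
      {G : Multiset U | countIn G F = k} = {D : Multiset (A × U) | countIn D (W ×ˢ F) = k} := by
    ext D; simp [Set.mem_preimage, hkey D]
  rw [this]
  exact measurableSet_counting (hW.prod hF) k


/- new defs -/
open Classical in
noncomputable def grpOf {A U : Type*} (D : Multiset (A × U)) (a : A) : Multiset U :=
  (D.filter (fun p => p.1 = a)).map Prod.snd

open Classical in
noncomputable def ddOf {A U : Type*} (M : Set (Multiset U)) (D : Multiset (A × U)) : Multiset A :=
  (D.map Prod.fst).dedup.filter (fun a => grpOf D a ∈ M)

open Classical in
lemma countIn_def {X : Type*} (D : Multiset X) (E : Set X) :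
    countIn D E = (D.filter (· ∈ E)).card := rfl

open Classical in
lemma ddOf_def {A U : Type*} (M : Set (Multiset U)) (D : Multiset (A × U)) :
    ddOf M D = (D.map Prod.fst).dedup.filter (fun a => grpOf D a ∈ M) := rfl

lemma countIn_ne_zero {X : Type*} (D : Multiset X) (E : Set X) :
    countIn D E ≠ 0 ↔ ∃ p ∈ D, p ∈ E := by
  classical
  rw [Ne, countIn_def, Multiset.card_eq_zero, Multiset.filter_eq_nil]
  push_neg
  rfl

open Classical in
lemma core_meas {A U : Type*} [MeasurableSpace A] [MeasurableSpace U] {ι : A → ℝ}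
    (hι : MeasurableEmbedding ι) {M : Set (Multiset U)}
    (hM : MeasurableSet[countingMS U] M) (m₀ : ℕ) (j : ℤ) :
    @Measurable _ _ (countingMS (A × U)) _
      (fun D : Multiset (A × U) => mOf (ddOf M D) (ι ⁻¹' cell m₀ j)) := by
  classical
  letI : MeasurableSpace (Multiset (A × U)) := countingMS (A × U)
  have hcellA : ∀ (L : ℕ) (i : ℤ), MeasurableSet (ι ⁻¹' cell L i) :=
    fun L i => hι.measurable (measurableSet_cell L i)
  -- the approximating functions
  set X : ℕ → Multiset (A × U) → ℝ≥0∞ := fun n D =>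
    ∑ i ∈ Finset.Ico (j * 2^n) ((j+1) * 2^n),
      ({D' : Multiset (A × U) | countIn D' ((ι ⁻¹' cell (m₀+n) i) ×ˢ (univ : Set U)) = 0}ᶜ ∩
        (fun D' : Multiset (A × U) =>
          (D'.filter (fun p => p.1 ∈ ι ⁻¹' cell (m₀+n) i)).map Prod.snd) ⁻¹' M).indicator
        (fun _ => (1:ℝ≥0∞)) D with hX
  have hXm : ∀ n, Measurable (X n) := by
    intro n
    refine Finset.measurable_sum _ fun i _ => ?_
    refine measurable_const.indicator (MeasurableSet.inter ?_ ?_)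
    · exact (measurableSet_counting ((hcellA _ i).prod MeasurableSet.univ) 0).compl
    · exact measurable_restrictSnd (hcellA _ i) hM
  have hlim : ∀ D, ∃ n₁, ∀ n ≥ n₁, X n D = mOf (ddOf M D) (ι ⁻¹' cell m₀ j) := by
    intro D
    set s : Finset A := (D.map Prod.fst).toFinset with hsdef
    have hmem : ∀ a : A, a ∈ s ↔ ∃ p ∈ D, p.1 = a := by
      intro a
      simp [hsdef, Multiset.mem_toFinset, Multiset.mem_map]
    -- separation
    have hsepAll : ∃ n₁ : ℕ, ∀ m ≥ n₁, ∀ a ∈ s, ∀ b ∈ s,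
        ⌊ι a * 2^m⌋ = ⌊ι b * 2^m⌋ → a = b := by
      have hch : ∀ q : A × A, ∃ N : ℕ, ι q.1 ≠ ι q.2 →
          ∀ m ≥ N, ⌊ι q.1 * 2^m⌋ ≠ ⌊ι q.2 * 2^m⌋ := by
        intro q
        by_cases h : ι q.1 ≠ ι q.2
        · obtain ⟨N, hN⟩ := separation h; exact ⟨N, fun _ => hN⟩
        · exact ⟨0, fun hc => absurd hc h⟩
      choose Nf hNf using hch
      refine ⟨(s ×ˢ s).sup Nf, fun m hm a ha b hb hfl => ?_⟩
      by_contra hab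
      exact hNf (a, b) (fun hh => hab (hι.injective hh)) m
        (le_trans (Finset.le_sup (Finset.mem_product.mpr ⟨ha, hb⟩)) hm) hfl
    obtain ⟨n₁, hsep⟩ := hsepAll
    refine ⟨n₁, fun n hn => ?_⟩
    have hsepn : ∀ a ∈ s, ∀ b ∈ s,
        ⌊ι a * 2^(m₀+n)⌋ = ⌊ι b * 2^(m₀+n)⌋ → a = b :=
      fun a ha b hb => hsep (m₀+n) (by omega) a ha b hb
    -- the grouped-filter identification
    have hR : ∀ a ∈ s,
        Multiset.filter (fun p : A × U => p.1 ∈ ι ⁻¹' cell (m₀+n) ⌊ι a * 2^(m₀+n)⌋) D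
          = Multiset.filter (fun p : A × U => p.1 = a) D := by
      intro a ha
      refine Multiset.filter_congr fun p hp => ?_
      constructor
      · intro hcl
        exact hsepn p.1 ((hmem p.1).mpr ⟨p, hp, rfl⟩) a ha
          (mem_cell_iff.mp (Set.mem_preimage.mp hcl))
      · intro h
        rw [Set.mem_preimage, mem_cell_iff, h]
    -- RHS as a Finset card
    have hRHS : countIn (ddOf M D) (ι ⁻¹' cell m₀ j)
        = (s.filter (fun a => a ∈ ι ⁻¹' cell m₀ j ∧ grpOf D a ∈ M)).card := by
      rw [countIn_def, ddOf_def, Multiset.filter_filter, Finset.card_def, Finset.filter_val,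
        hsdef, Multiset.toFinset_val]
    -- LHS as a Finset card
    have hLHS : X n D = (((Finset.Ico (j * 2^n) ((j+1) * 2^n))).filter
        (fun i => countIn D ((ι ⁻¹' cell (m₀+n) i) ×ˢ (univ : Set U)) ≠ 0 ∧
          (D.filter (fun p => p.1 ∈ ι ⁻¹' cell (m₀+n) i)).map Prod.snd ∈ M)).card := by
      simp only [hX]
      simp only [Set.indicator_apply, Set.mem_inter_iff, Set.mem_compl_iff, Set.mem_setOf_eq,
        Set.mem_preimage]
      rw [Finset.sum_boole]
    rw [hLHS, mOf_apply _ (hcellA m₀ j), hRHS]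
    norm_cast
    -- bijection
    refine (Finset.card_bij (fun a _ => ⌊ι a * 2^(m₀+n)⌋) ?_ ?_ ?_).symm
    · -- maps to
      intro a ha
      obtain ⟨has, hacell, haM⟩ := Finset.mem_filter.mp ha
      refine Finset.mem_filter.mpr ⟨?_, ?_, ?_⟩
      · rw [Finset.mem_Ico]
        exact_mod_cast (floor_refine m₀ n j (ι a)).mp (mem_cell_iff.mp (Set.mem_preimage.mp hacell))
      · refine (countIn_ne_zero _ _).mpr ?_
        obtain ⟨p, hpD, hp1⟩ := (hmem a).mp has
        refine ⟨p, hpD, ?_⟩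
        rw [Set.mem_prod]
        exact ⟨by rw [Set.mem_preimage, mem_cell_iff, hp1], trivial⟩
      · rw [hR a has]
        exact haM
    · -- injective
      intro a ha b hb hfl
      exact hsepn a (Finset.mem_filter.mp ha).1 b (Finset.mem_filter.mp hb).1 hfl
    · -- surjective
      intro i hi
      have hmf := Finset.mem_filter.mp hi
      have hiIco := hmf.1
      have h1 := hmf.2.1
      have h2 := hmf.2.2
      obtain ⟨p, hpD, hpcell⟩ := (countIn_ne_zero _ _).mp h1
      have hp1 : p.1 ∈ ι ⁻¹' cell (m₀+n) i := (Set.mem_prod.mp hpcell).1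
      have has : p.1 ∈ s := (hmem p.1).mpr ⟨p, hpD, rfl⟩
      have hfl : ⌊ι p.1 * 2^(m₀+n)⌋ = i := mem_cell_iff.mp (Set.mem_preimage.mp hp1)
      refine ⟨p.1, Finset.mem_filter.mpr ⟨has, ?_, ?_⟩, hfl⟩
      · rw [Set.mem_preimage, mem_cell_iff]
        refine (floor_refine m₀ n j (ι p.1)).mpr ?_
        rw [hfl]
        exact_mod_cast Finset.mem_Ico.mp hiIco
      · have h2' := h2
        rw [← hfl] at h2'
        rw [hR p.1 has] at h2'
        exact h2'
  -- limit
  have heq : (fun D => mOf (ddOf M D) (ι ⁻¹' cell m₀ j)) = fun D => ⨆ k, ⨅ n, X (k+n) D := by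
    funext D
    obtain ⟨n₁, hn₁⟩ := hlim D
    apply le_antisymm
    · refine le_iSup_of_le n₁ (le_iInf fun n => ?_)
      exact (hn₁ (n₁ + n) (by omega)).ge
    · refine iSup_le fun k => ?_
      refine (iInf_le _ n₁).trans ?_
      exact (hn₁ (k + n₁) (by omega)).le
  rw [heq]
  exact Measurable.iSup fun k => Measurable.iInf fun n => hXm (k+n)


-- the new piece
lemma key_meas {A U : Type*} [MeasurableSpace A] [MeasurableSpace U] {ι : A → ℝ}
    (hι : MeasurableEmbedding ι) {M : Set (Multiset U)}
    (hM : MeasurableSet[countingMS U] M) {S : Set A} (hS : MeasurableSet S) :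
    @Measurable _ _ (countingMS (A × U)) _
      (fun D : Multiset (A × U) => mOf (ddOf M D) S) := by
  classical
  letI : MeasurableSpace (Multiset (A × U)) := countingMS (A × U)
  have hcellA : ∀ (L : ℕ) (i : ℤ), MeasurableSet (ι ⁻¹' cell L i) :=
    fun L i => hι.measurable (measurableSet_cell L i)
  set Cdy : Set (Set A) := {s : Set A | ∃ (m : ℕ) (i : ℤ), s = ι ⁻¹' cell m i} with hCdy
  have h_eq : ‹MeasurableSpace A› = MeasurableSpace.generateFrom Cdy := by
    refine le_antisymm ?_ (MeasurableSpace.generateFrom_le ?_)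
    · intro t ht
      have h1 : t = ι ⁻¹' (ι '' t) := (hι.injective.preimage_image t).symm
      have h2 : MeasurableSet (ι '' t) := hι.measurableSet_image.mpr ht
      have h3 : @Measurable A ℝ (MeasurableSpace.generateFrom Cdy) _ ι := by
        have hgen : @Measurable A ℝ (MeasurableSpace.generateFrom Cdy)
            (MeasurableSpace.generateFrom {s : Set ℝ | ∃ m i, s = cell m i}) ι :=
          @measurable_generateFrom A ℝ (MeasurableSpace.generateFrom Cdy) _ _
            (by rintro _ ⟨m, i, rfl⟩; exact MeasurableSpace.measurableSet_generateFrom ⟨m, i, rfl⟩)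
        exact hgen.mono le_rfl borel_le_cells
      rw [h1]
      exact h3 h2
    · rintro _ ⟨m, i, rfl⟩
      exact hcellA m i
  have h_pi : IsPiSystem Cdy := by
    rintro _ ⟨m, i, rfl⟩ _ ⟨m', i', rfl⟩ hne
    obtain ⟨a, ha, ha'⟩ := hne
    rw [Set.mem_preimage, mem_cell_iff] at ha ha'
    rcases le_total m m' with h | h
    · have hsub : ι ⁻¹' cell m' i' ⊆ ι ⁻¹' cell m i := by
        intro y hy
        rw [Set.mem_preimage, mem_cell_iff] at hy ⊢
        rw [← ha]
        exact floor_coarse h (hy.trans ha'.symm)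
      rw [Set.inter_eq_self_of_subset_right hsub]
      exact ⟨m', i', rfl⟩
    · have hsub : ι ⁻¹' cell m i ⊆ ι ⁻¹' cell m' i' := by
        intro y hy
        rw [Set.mem_preimage, mem_cell_iff] at hy ⊢
        rw [← ha']
        exact floor_coarse h (hy.trans ha.symm)
      rw [Set.inter_eq_self_of_subset_left hsub]
      exact ⟨m, i, rfl⟩
  have huniv : Measurable fun D : Multiset (A × U) => mOf (ddOf M D) (univ : Set A) := by
    have hU : (univ : Set A) = ⋃ i : ℤ, ι ⁻¹' cell 0 i := by
      ext a
      simp only [Set.mem_iUnion, Set.mem_univ, true_iff, Set.mem_preimage]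
      exact ⟨⌊ι a * 2^0⌋, mem_cell_iff.mpr rfl⟩
    have hdis : Pairwise (Function.onFun Disjoint fun i : ℤ => ι ⁻¹' cell 0 i) := by
      intro i i' hne
      refine Set.disjoint_left.mpr fun a hai hai' => hne ?_
      rw [Set.mem_preimage, mem_cell_iff] at hai hai'
      rw [← hai, ← hai']
    have : (fun D : Multiset (A × U) => mOf (ddOf M D) univ)
        = fun D => ∑' i : ℤ, mOf (ddOf M D) (ι ⁻¹' cell 0 i) := by
      funext D
      rw [hU, measure_iUnion hdis fun i => hcellA 0 i]
    rw [this]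
    exact Measurable.ennreal_tsum fun i => core_meas hι hM 0 i
  revert S
  have := MeasurableSpace.induction_on_inter
    (C := fun S _ => Measurable fun D : Multiset (A × U) => mOf (ddOf M D) S)
    h_eq h_pi ?_ ?_ ?_ ?_
  · exact fun S hS => this S hS
  · simp only [measure_empty]
    exact measurable_const
  · rintro _ ⟨m, i, rfl⟩
    exact core_meas hι hM m i
  · intro t ht hC
    have : (fun D : Multiset (A × U) => mOf (ddOf M D) tᶜ)
        = fun D => mOf (ddOf M D) univ - mOf (ddOf M D) t := by
      funext D
      rw [measure_compl ht (mOf_ne_top _ _)]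
    rw [this]
    exact huniv.sub hC
  · intro f hdisj hm hC
    have : (fun D : Multiset (A × U) => mOf (ddOf M D) (⋃ i, f i))
        = fun D => ∑' i, mOf (ddOf M D) (f i) := by
      funext D
      rw [measure_iUnion hdisj hm]
    rw [this]
    exact Measurable.ennreal_tsum hC


open Classical in
lemma countIn_Q {A U V : Type*} (Φ : Multiset U → V) (D : Multiset (A × U))
    (S : Set A) (T : Set V) :
    countIn ((D.map Prod.fst).dedup.map (fun a => (a, Φ (grpOf D a)))) (S ×ˢ T)
      = countIn (ddOf (Φ ⁻¹' T) D) S := by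
  classical
  rw [countIn_def, countIn_def, ddOf_def, Multiset.filter_map, Multiset.card_map]
  generalize (D.map Prod.fst).dedup = t
  induction t using Multiset.induction with
  | empty => simp
  | cons a t ih =>
    by_cases h1 : a ∈ S <;> by_cases h2 : Φ (grpOf D a) ∈ T <;>
      simp [Multiset.filter_cons, h1, h2, Set.mem_prod, Set.mem_preimage, Function.comp, ih]

open Classical in
theorem main {A U V : Type*}
    [MeasurableSpace A] [StandardBorelSpace A]
    [MeasurableSpace U] [StandardBorelSpace U]
    [MeasurableSpace V] [StandardBorelSpace V]
    (Φ : Multiset U → V) (hΦ : @Measurable _ _ (countingMS U) _ Φ) :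
    @Measurable _ _ (countingMS (A × U)) (countingMS (A × V))
      (fun D : Multiset (A × U) =>
        (D.map Prod.fst).dedup.map
          (fun a => (a, Φ ((D.filter (fun p => p.1 = a)).map Prod.snd)))) := by
  classical
  letI : MeasurableSpace (Multiset (A × U)) := countingMS (A × U)
  letI : MeasurableSpace (Multiset U) := countingMS U
  obtain ⟨ι, hι⟩ := exists_measurableEmbedding_real A
  show @Measurable _ _ (countingMS (A × U)) (countingMS (A × V))
    (fun D : Multiset (A × U) => (D.map Prod.fst).dedup.map (fun a => (a, Φ (grpOf D a))))
  set Q : Multiset (A × U) → Multiset (A × V) :=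
    fun D => (D.map Prod.fst).dedup.map (fun a => (a, Φ (grpOf D a))) with hQ
  have hbasic : ∀ (S : Set A) (T : Set V), MeasurableSet S → MeasurableSet T →
      Measurable fun D => mOf (Q D) (S ×ˢ T) := by
    intro S T hS hT
    have hkey := key_meas hι (hΦ hT) hS
    have heq : (fun D => mOf (Q D) (S ×ˢ T))
        = fun D : Multiset (A × U) => mOf (ddOf (Φ ⁻¹' T) D) S := by
      funext D
      rw [mOf_apply _ (hS.prod hT), mOf_apply _ hS]
      exact congrArg _ (countIn_Q Φ D S T)
    rw [heq]
    exact hkey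
  have huniv : Measurable fun D => mOf (Q D) (univ : Set (A × V)) := by
    have := hbasic univ univ MeasurableSet.univ MeasurableSet.univ
    rwa [Set.univ_prod_univ] at this
  have hall : ∀ E : Set (A × V), MeasurableSet E → Measurable fun D => mOf (Q D) E := by
    have hind := MeasurableSpace.induction_on_inter
      (C := fun E _ => Measurable fun D => mOf (Q D) E)
      generateFrom_prod.symm isPiSystem_prod ?_ ?_ ?_ ?_
    · exact fun E hE => hind E hE
    · simp only [measure_empty]
      exact measurable_const
    · rintro _ ⟨S, hS, T, hT, rfl⟩
      exact hbasic S T hS hT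
    · intro t ht hC
      have heq : (fun D => mOf (Q D) tᶜ)
          = fun D => mOf (Q D) univ - mOf (Q D) t := by
        funext D
        rw [measure_compl ht (mOf_ne_top _ _)]
      rw [heq]
      exact huniv.sub hC
    · intro f hdisj hm hC
      have heq : (fun D => mOf (Q D) (⋃ i, f i))
          = fun D => ∑' i, mOf (Q D) (f i) := by
        funext D
        rw [measure_iUnion hdisj hm]
      rw [heq]
      exact Measurable.ennreal_tsum hC
  apply measurable_generateFrom
  rintro _ ⟨E, n, hE, rfl⟩
  have hset : Q ⁻¹' {D' : Multiset (A × V) | countIn D' E = n}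
      = (fun D => mOf (Q D) E) ⁻¹' {((n : ℕ) : ℝ≥0∞)} := by
    ext D
    simp only [Set.mem_preimage, Set.mem_setOf_eq, Set.mem_singleton_iff]
    rw [mOf_apply _ hE]
    exact ⟨fun h => by rw [h], fun h => Nat.cast_injective h⟩
  rw [hset]
  exact hall E hE (measurableSet_singleton _)


end GroupByAggregationAux

open Classical in
theorem groupByAggregation_measurable {A U V : Type*}
    [MeasurableSpace A] [StandardBorelSpace A]
    [MeasurableSpace U] [StandardBorelSpace U]
    [MeasurableSpace V] [StandardBorelSpace V]
    (Φ : Multiset U → V) (hΦ : @Measurable _ _ (countingMS U) _ Φ) :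
    @Measurable _ _ (countingMS (A × U)) (countingMS (A × V))
      (fun D : Multiset (A × U) =>
        (D.map Prod.fst).dedup.map
          (fun a => (a, Φ ((D.filter (fun p => p.1 = a)).map Prod.snd)))) :=
  GroupByAggregationAux.main Φ hΦ
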